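/- Let S be an ℕ-graded Noetherian integral domain, finitely generated as an algebra over the field S_0, with gcd{n > 0 : S_n ≠ 0} = 1, and let M be a finitely generated graded S-module of generic rank n₁ (i.e., dim_{Q(S)}(M ⊗_S Q(S)) = n₁ for the quotient field Q(S)). Then there exist an integer a > 0 and an exact sequence of graded S-modules 0 → S(−a)^{n₁} → M → Q'' → 0, in which the first map is an injective graded S-linear map of degree 0 and dim Q'' ≤ dim S − 1. -/

import Mathlib

noncomputable section


lemma semigroup_cofinite' (T : AddSubmonoid ℕ)
    (hgcd : ∀ c : ℕ, (∀ m ∈ T, c ∣ m) → c = 1) :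
    ∃ N : ℕ, ∀ n, N ≤ n → n ∈ T := by
  obtain ⟨q, hq, hq1⟩ : ∃ q : ℕ, q ∈ T ∧ q + 1 ∈ T := by
    set G : AddSubgroup ℤ := AddSubgroup.closure ((↑) '' (T : Set ℕ)) with hG
    obtain ⟨g, hg⟩ := Int.subgroup_cyclic G
    have hdvd : ∀ m ∈ T, g.natAbs ∣ m := by
      intro m hm
      have hmem : (m : ℤ) ∈ G := AddSubgroup.subset_closure ⟨m, hm, rfl⟩
      rw [hg, AddSubgroup.mem_closure_singleton] at hmem
      obtain ⟨n, hn⟩ := hmem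
      have hn' : n * g = (m:ℤ) := by simpa using hn
      have hd : g ∣ (m : ℤ) := ⟨n, by rw [← hn']; ring⟩
      simpa using Int.natAbs_dvd_natAbs.mpr hd
    have h1 : (1 : ℤ) ∈ G := by
      have hge := hgcd g.natAbs hdvd
      rw [hg, AddSubgroup.mem_closure_singleton]
      rcases Int.natAbs_eq g with h | h
      · refine ⟨1, ?_⟩; rw [one_smul]; omega
      · refine ⟨-1, ?_⟩; rw [neg_smul, one_smul]; omega
    have key : ∀ x ∈ G, ∃ p ∈ T, ∃ q ∈ T, x = (p : ℤ) - q := by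
      intro x hx
      induction hx using AddSubgroup.closure_induction with
      | mem y hy => obtain ⟨t, ht, rfl⟩ := hy; exact ⟨t, ht, 0, zero_mem T, by simp⟩
      | zero => exact ⟨0, zero_mem T, 0, zero_mem T, by simp⟩
      | add a b _ _ ha hb =>
          obtain ⟨p, hp, q, hq, rfl⟩ := ha
          obtain ⟨p', hp', q', hq', rfl⟩ := hb
          exact ⟨p + p', add_mem hp hp', q + q', add_mem hq hq', by push_cast; ring⟩
      | neg a _ ha =>
          obtain ⟨p, hp, q, hq, rfl⟩ := ha
          exact ⟨q, hq, p, hp, by ring⟩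
    obtain ⟨p, hp, q, hqT, hpq⟩ := key 1 h1
    have hpq' : p = q + 1 := by omega
    exact ⟨q, hqT, hpq' ▸ hp⟩
  rcases Nat.eq_zero_or_pos q with rfl | hqpos
  · refine ⟨0, fun n _ => ?_⟩
    have := AddSubmonoid.nsmul_mem T (show (1:ℕ) ∈ T by simpa using hq1) n
    simpa [nsmul_eq_mul] using this
  · refine ⟨q * q, fun n hn => ?_⟩
    set r := n % q with hr
    set c := n / q with hc
    have hrq : r < q := Nat.mod_lt _ hqpos
    have hcq : q ≤ c := (Nat.le_div_iff_mul_le hqpos).mpr hn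
    have hrc : r ≤ c := le_trans hrq.le hcq
    obtain ⟨t, hct⟩ : ∃ t, c = r + t := ⟨c - r, by omega⟩
    have hdm : q * c + r = n := Nat.div_add_mod n q
    have hn' : n = r * (q + 1) + t * q := by
      rw [← hdm, hct]; ring
    rw [hn']
    exact add_mem (by simpa [nsmul_eq_mul] using AddSubmonoid.nsmul_mem T hq1 r)
      (by simpa [nsmul_eq_mul] using AddSubmonoid.nsmul_mem T hq t)

lemma dim_quot_succ_le' {S : Type*} [CommRing S] [IsDomain S] (I : Ideal S) (hI : I ≠ ⊥) :
    ringKrullDim (S ⧸ I) + 1 ≤ ringKrullDim S := by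
  obtain ⟨x, hxI, hx0⟩ := Submodule.exists_mem_ne_zero_of_ne_bot hI
  by_cases h : Nonempty (PrimeSpectrum (S ⧸ I))
  · rw [ringKrullDim, ringKrullDim, ← Order.krullDim_withBot]
    refine Order.krullDim_le_of_strictMono
      (fun o => o.elim ⟨⊥, Ideal.bot_prime⟩
        (fun p => ⟨p.asIdeal.comap (Ideal.Quotient.mk I), p.isPrime.comap _⟩)) ?_
    intro a b hab
    induction b using WithBot.recBotCoe with
    | bot => exact absurd hab (by simp)
    | coe p =>
      induction a using WithBot.recBotCoe with
      | bot =>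
        refine lt_of_le_of_ne bot_le ?_
        intro hc
        have : x ∈ (⊥ : Ideal S) := by
          have : x ∈ p.asIdeal.comap (Ideal.Quotient.mk I) := by
            simp [Ideal.mem_comap, Ideal.Quotient.eq_zero_iff_mem.mpr hxI]
          rwa [show (⊥:Ideal S) = p.asIdeal.comap (Ideal.Quotient.mk I) from
            congrArg PrimeSpectrum.asIdeal hc]
        exact hx0 (by simpa using this)
      | coe q =>
        have hqp : q < p := by exact_mod_cast hab
        refine lt_of_le_of_ne (Ideal.comap_mono hqp.le) ?_
        intro hc
        exact hqp.ne (PrimeSpectrum.ext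
          (Ideal.comap_injective_of_surjective _ Ideal.Quotient.mk_surjective
            (congrArg PrimeSpectrum.asIdeal hc)))
  · rw [not_nonempty_iff] at h
    rw [ringKrullDim, Order.krullDim_eq_bot_iff.mpr h, WithBot.bot_add]
    exact bot_le

/-- Let `S` be an ℕ-graded Noetherian domain, finitely generated over
the field `S₀`, with `gcd {n > 0 | S_n ≠ 0} = 1`, and let `M` be a finitely generated
graded `S`-module of generic rank `n₁`.  Then there are `a > 0` and an exact sequence of
graded `S`-modules `0 → S(−a)^{n₁} → M → Q'' → 0`, the first map being an injective
graded map of degree `0`, with `dim Q'' ≤ dim S − 1`. -/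
theorem statement12
    (k : Type*) [Field k]
    (S : Type*) [CommRing S] [IsDomain S] [IsNoetherianRing S] [Algebra k S]
    [Algebra.FiniteType k S]
    (𝒜 : ℕ → Submodule k S) [GradedAlgebra 𝒜]
    (h𝒜0 : 𝒜 0 ≤ Submodule.span k {1})
    (hgcd : ∀ c : ℕ, (∀ m, 0 < m → 𝒜 m ≠ ⊥ → c ∣ m) → c = 1)
    (M : Type*) [AddCommGroup M] [Module S M] [Module k M] [IsScalarTower k S M]
    [Module.Finite S M]
    (ℳ : ℕ → Submodule k M) [DirectSum.Decomposition ℳ] [SetLike.GradedSMul 𝒜 ℳ]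
    (n₁ : ℕ)
    (hrank : Module.finrank (FractionRing S) (TensorProduct S (FractionRing S) M) = n₁) :
    ∃ a : ℕ, 0 < a ∧ ∃ α : (Fin n₁ → S) →ₗ[S] M,
      Function.Injective α ∧
      (∀ (j : ℕ) (v : Fin n₁ → S), (∀ i, v i ∈ 𝒜 j) → α v ∈ ℳ (j + a)) ∧
      ringKrullDim (S ⧸ Module.annihilator S (M ⧸ LinearMap.range α)) + 1 ≤
        ringKrullDim S := by
  classical
  set F := FractionRing S with hF
  set f : M →ₗ[S] TensorProduct S F M := TensorProduct.mk S F M 1 with hf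
  haveI hloc : IsLocalizedModule (nonZeroDivisors S) f :=
    (isLocalizedModule_iff_isBaseChange (nonZeroDivisors S) F f).mpr
      (TensorProduct.isBaseChange S M F)
  set Tset : Set (TensorProduct S F M) := {x | ∃ dd : ℕ, ∃ mm : M, mm ∈ ℳ dd ∧ f mm = x}
    with hTset
  have hspan : Submodule.span F Tset = ⊤ := by
    rw [Submodule.eq_top_iff']
    intro x
    obtain ⟨⟨mm, ss⟩, hms⟩ := IsLocalizedModule.surj (nonZeroDivisors S) f x
    have hfm : f mm ∈ Submodule.span F Tset := by
      rw [← DirectSum.sum_support_decompose ℳ mm, map_sum]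
      exact Submodule.sum_mem _ fun i _ =>
        Submodule.subset_span ⟨i, _, (DirectSum.decompose ℳ mm i).2, rfl⟩
    have hsu : IsUnit (algebraMap S F (ss : S)) := IsLocalization.map_units F ss
    have h1 : (algebraMap S F (ss : S)) • x = f mm := by
      rw [algebraMap_smul]; exact hms
    have hinv : ((hsu.unit⁻¹ : Fˣ) : F) * algebraMap S F (ss : S) = 1 :=
      IsUnit.val_inv_mul hsu
    have h2 : x = ((hsu.unit⁻¹ : Fˣ) : F) • f mm := by
      rw [← h1, smul_smul, hinv, one_smul]
    rw [h2]
    exact Submodule.smul_mem _ _ hfm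
  obtain ⟨b, hbT, hbspan, hbli⟩ := exists_linearIndependent F Tset
  let B : Module.Basis b F (TensorProduct S F M) := Module.Basis.mk hbli (by rw [Subtype.range_val, hbspan, hspan])
  haveI : Fintype b := FiniteDimensional.fintypeBasisIndex B
  have hcard : Fintype.card b = n₁ := by rw [← hrank, Module.finrank_eq_card_basis B]
  let e : b ≃ Fin n₁ := Fintype.equivFinOfCardEq hcard
  let B' : Module.Basis (Fin n₁) F (TensorProduct S F M) := B.reindex e
  have hB'val : ∀ i, B' i = ((e.symm i : b) : TensorProduct S F M) := by
    intro i
    rw [show B' i = B (e.symm i) from B.reindex_apply e i, Module.Basis.mk_apply]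
  have hB'mem : ∀ i, ∃ dd : ℕ, ∃ mm : M, mm ∈ ℳ dd ∧ f mm = B' i := by
    intro i
    obtain ⟨dd, mm, hmm, hfmm⟩ := hbT (e.symm i).2
    exact ⟨dd, mm, hmm, by rw [hfmm, ← hB'val]⟩
  choose d m hm hfm using hB'mem
  set Tdeg : AddSubmonoid ℕ :=
    { carrier := {n | ∃ s : S, s ∈ 𝒜 n ∧ s ≠ 0}
      zero_mem' := ⟨1, SetLike.one_mem_graded 𝒜, one_ne_zero⟩
      add_mem' := fun {x y} hx hy => by
        obtain ⟨s, hsm, hs0⟩ := hx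
        obtain ⟨t, htm, ht0⟩ := hy
        exact ⟨s * t, SetLike.mul_mem_graded hsm htm, mul_ne_zero hs0 ht0⟩ } with hTdeg
  obtain ⟨N, hN⟩ := semigroup_cofinite' Tdeg (by
    intro c hc
    refine hgcd c fun n hn hne => ?_
    obtain ⟨ss, hsmem, hs0⟩ := Submodule.exists_mem_ne_zero_of_ne_bot hne
    exact hc n ⟨ss, hsmem, hs0⟩)
  set D : ℕ := Finset.univ.sup d with hD
  set a : ℕ := N + D + 1 with haa
  have hda : ∀ i, d i ≤ D := fun i => Finset.le_sup (Finset.mem_univ i)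
  have hsub : ∀ i, ∃ ss : S, ss ∈ 𝒜 (a - d i) ∧ ss ≠ 0 := fun i =>
    hN _ (by have := hda i; omega)
  choose s hs hs0 using hsub
  set w : Fin n₁ → M := fun i => s i • m i with hw
  set α : (Fin n₁ → S) →ₗ[S] M := Fintype.linearCombination S w with hα
  have hαapply : ∀ v : Fin n₁ → S, α v = ∑ i, v i • w i := fun v =>
    Fintype.linearCombination_apply S w v
  have hfα : ∀ v : Fin n₁ → S, f (α v) = ∑ i, algebraMap S F (v i * s i) • B' i := by
    intro v
    rw [hαapply, map_sum]
    refine Finset.sum_congr rfl fun i _ => ?_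
    rw [hw, ← mul_smul, map_smul, hfm, algebraMap_smul]
  have hinj : Function.Injective α := by
    rw [← LinearMap.ker_eq_bot, LinearMap.ker_eq_bot']
    intro v hv
    have h0 : (∑ i, algebraMap S F (v i * s i) • B' i) = 0 := by
      rw [← hfα, hv, map_zero]
    have hc := Fintype.linearIndependent_iff.mp B'.linearIndependent _ h0
    funext i
    have h1 : v i * s i = 0 := by
      apply IsFractionRing.injective S F
      rw [hc i, map_zero]
    rcases mul_eq_zero.mp h1 with h | h
    · exact h
    · exact absurd h (hs0 i)
  have hgr : ∀ (j : ℕ) (v : Fin n₁ → S), (∀ i, v i ∈ 𝒜 j) → α v ∈ ℳ (j + a) := by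
    intro j v hv
    rw [hαapply]
    refine Submodule.sum_mem _ fun i _ => ?_
    have h1 : w i ∈ ℳ ((a - d i) + d i) := SetLike.GradedSMul.smul_mem (hs i) (hm i)
    have h2 : (a - d i) + d i = a := by have := hda i; omega
    rw [h2] at h1
    exact SetLike.GradedSMul.smul_mem (hv i) h1
  have hann : Module.annihilator S (M ⧸ LinearMap.range α) ≠ ⊥ := by
    obtain ⟨n, g, hg⟩ := Module.Finite.exists_fin (R := S) (M := M)
    have key : ∀ t : Fin n, ∃ u : S, u ≠ 0 ∧ u • g t ∈ LinearMap.range α := by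
      intro t
      have hsu : ∀ i, IsUnit (algebraMap S F (s i)) := fun i =>
        IsLocalization.map_units F ⟨s i, mem_nonZeroDivisors_of_ne_zero (hs0 i)⟩
      set c : Fin n₁ → F := fun i =>
        (((hsu i).unit⁻¹ : Fˣ) : F) * B'.repr (f (g t)) i with hcdef
      obtain ⟨q, hq⟩ := IsLocalization.exist_integer_multiples_of_finite
        (nonZeroDivisors S) c
      have hq' : ∀ i, ∃ y : S, algebraMap S F y = (q : S) • c i := fun i => hq i
      choose bv hbv using hq'
      have h3 : algebraMap S F (q : S) • f (g t) = f (α bv) := by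
        rw [hfα, ← B'.sum_repr (f (g t)), Finset.smul_sum]
        refine Finset.sum_congr rfl fun i _ => ?_
        rw [smul_smul]
        congr 1
        have h5 : (((hsu i).unit⁻¹ : Fˣ) : F) * algebraMap S F (s i) = 1 :=
          IsUnit.val_inv_mul (hsu i)
        calc algebraMap S F (q : S) * B'.repr (f (g t)) i
            = (algebraMap S F (q : S) *
                ((((hsu i).unit⁻¹ : Fˣ) : F) * B'.repr (f (g t)) i)) *
                algebraMap S F (s i) := by
              rw [mul_assoc, mul_assoc]
              rw [mul_comm (B'.repr (f (g t)) i) (algebraMap S F (s i))]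
              rw [← mul_assoc (((hsu i).unit⁻¹ : Fˣ) : F), h5, one_mul]
          _ = algebraMap S F (bv i) * algebraMap S F (s i) := by
              rw [hbv i, Algebra.smul_def, hcdef]
          _ = algebraMap S F (bv i * s i) := (map_mul _ _ _).symm
      have h6 : f ((q : S) • g t - α bv) = 0 := by
        rw [map_sub, map_smul, ← algebraMap_smul F (q : S) (f (g t)), h3, sub_self]
      obtain ⟨r, hr⟩ := (IsLocalizedModule.eq_zero_iff (nonZeroDivisors S) f).mp h6
      have hr' : ((r : S) * (q : S)) • g t = (r : S) • α bv := by
        have : (r : S) • ((q : S) • g t - α bv) = 0 := hr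
        rw [smul_sub, sub_eq_zero] at this
        rw [mul_smul]; exact this
      refine ⟨(r : S) * (q : S),
        mul_ne_zero (nonZeroDivisors.ne_zero r.2) (nonZeroDivisors.ne_zero q.2), ?_⟩
      rw [hr']
      exact ⟨(r : S) • bv, map_smul α _ _⟩
    choose u hu0 hu using key
    set utot : S := ∏ t, u t with hutot
    have hutot0 : utot ≠ 0 := Finset.prod_ne_zero_iff.mpr fun t _ => hu0 t
    have hmem : ∀ x : M, utot • x ∈ LinearMap.range α := by
      have hsp : ∀ x ∈ Submodule.span S (Set.range g), utot • x ∈ LinearMap.range α := by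
        intro x hxs
        induction hxs using Submodule.span_induction with
        | mem y hy =>
          obtain ⟨t, rfl⟩ := hy
          rw [hutot, ← Finset.prod_erase_mul _ _ (Finset.mem_univ t), mul_smul]
          exact Submodule.smul_mem _ _ (hu t)
        | zero => simp
        | add x y _ _ hx hy => rw [smul_add]; exact add_mem hx hy
        | smul r x _ hx => rw [smul_comm]; exact Submodule.smul_mem _ _ hx
      intro x
      exact hsp x (by rw [hg]; trivial)
    have hmem' : utot ∈ Module.annihilator S (M ⧸ LinearMap.range α) := by
      rw [Module.mem_annihilator]
      intro z
      obtain ⟨x, rfl⟩ := Submodule.Quotient.mk_surjective _ z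
      rw [← Submodule.Quotient.mk_smul, Submodule.Quotient.mk_eq_zero]
      exact hmem x
    intro hbot
    rw [hbot] at hmem'
    exact hutot0 (by simpa using hmem')
  exact ⟨a, by omega, α, hinj, hgr, dim_quot_succ_le' _ hann⟩
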